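/- Let F be a field of characteristic 2, let a, a', e, e' ∈ F and let b, c, b', c' ∈ Fˣ. Then there exists g ∈ SO₅(F) with g · n(a,b,c,e) · g⁻¹ = n(a',b',c',e') if and only if e·c⁻¹·b⁻² − e'·(c')⁻¹·(b')⁻² ∈ F^{(2)}. -/

import Mathlib

/-- The `5×5` matrix `n(a,b,c,e)` over `F` (rows and columns indexed `0,…,4`) with entries
`n₀₃ = a`, `n₀₄ = b`, `n₁₂ = c`, `n₁₄ = e`, `n₂₃ = e`, `n₄₃ = c` and all other entries `0`. -/
def soFiveNilpotent (F : Type*) [Field F] (a b c e : F) : Matrix (Fin 5) (Fin 5) F :=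
  !![0, 0, 0, a, b;
     0, 0, c, 0, e;
     0, 0, 0, e, 0;
     0, 0, 0, 0, 0;
     0, 0, 0, c, 0]

private def Umat {F : Type*} [Field F] (z t : F) : Matrix (Fin 5) (Fin 5) F :=
  !![1,0,0,0,z; 0,1,t,0,t*z^2; 0,0,1,0,z^2; 0,0,0,1,0; 0,0,0,t,1]

private def Uinv {F : Type*} [Field F] (z t : F) : Matrix (Fin 5) (Fin 5) F :=
  !![1,0,0,z*t,-z; 0,1,-t,0,0; 0,0,1,z^2*t,-z^2; 0,0,0,1,0; 0,0,0,-t,1]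

private def Dmat {F : Type*} [Field F] (al be : F) : Matrix (Fin 5) (Fin 5) F :=
  !![1,0,0,0,0; 0,al,0,0,0; 0,0,be,0,0; 0,0,0,al⁻¹,0; 0,0,0,0,be⁻¹]

private def Dinv {F : Type*} [Field F] (al be : F) : Matrix (Fin 5) (Fin 5) F :=
  !![1,0,0,0,0; 0,al⁻¹,0,0,0; 0,0,be⁻¹,0,0; 0,0,0,al,0; 0,0,0,0,be]

section Aux

variable {F : Type*} [Field F]

private lemma uMul (z t : F) : Umat z t * Uinv z t = 1 := by
  ext i j
  fin_cases i <;> fin_cases j <;>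
    simp [Umat, Uinv, Matrix.mul_apply, Fin.sum_univ_five, Matrix.one_apply,
      Matrix.vecHead, Matrix.vecTail] <;> ring

private lemma uMul' (z t : F) : Uinv z t * Umat z t = 1 := by
  ext i j
  fin_cases i <;> fin_cases j <;>
    simp [Umat, Uinv, Matrix.mul_apply, Fin.sum_univ_five, Matrix.one_apply,
      Matrix.vecHead, Matrix.vecTail] <;> ring

private lemma dMul {al be : F} (ha : al ≠ 0) (hb : be ≠ 0) : Dmat al be * Dinv al be = 1 := by
  ext i j
  fin_cases i <;> fin_cases j <;>
    simp [Dmat, Dinv, Matrix.mul_apply, Fin.sum_univ_five, Matrix.one_apply,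
      Matrix.vecHead, Matrix.vecTail] <;> field_simp

private lemma dMul' {al be : F} (ha : al ≠ 0) (hb : be ≠ 0) : Dinv al be * Dmat al be = 1 := by
  ext i j
  fin_cases i <;> fin_cases j <;>
    simp [Dmat, Dinv, Matrix.mul_apply, Fin.sum_univ_five, Matrix.one_apply,
      Matrix.vecHead, Matrix.vecTail] <;> field_simp

private lemma uQ (z t : F) (htwo : (2:F) = 0) (u : Fin 5 → F) :
    ((Umat z t).mulVec u 0) ^ 2 + ((Umat z t).mulVec u 1) * ((Umat z t).mulVec u 3) +
      ((Umat z t).mulVec u 2) * ((Umat z t).mulVec u 4)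
    = (u 0) ^ 2 + (u 1) * (u 3) + (u 2) * (u 4) := by
  simp [Umat, Matrix.mulVec, dotProduct, Fin.sum_univ_five]
  linear_combination (z*u 0*u 4 + z^2*(u 4)^2 + t*u 2*u 3 + t*z^2*u 3*u 4) * htwo

private lemma dQ {al be : F} (ha : al ≠ 0) (hb : be ≠ 0) (u : Fin 5 → F) :
    ((Dmat al be).mulVec u 0) ^ 2 + ((Dmat al be).mulVec u 1) * ((Dmat al be).mulVec u 3) +
      ((Dmat al be).mulVec u 2) * ((Dmat al be).mulVec u 4)
    = (u 0) ^ 2 + (u 1) * (u 3) + (u 2) * (u 4) := by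
  simp [Dmat, Matrix.mulVec, dotProduct, Fin.sum_univ_five]
  field_simp

private lemma uConj (z t : F) (htwo : (2:F) = 0) (a b c e : F) :
    Umat z t * soFiveNilpotent F a b c e
      = soFiveNilpotent F (a + c*z + b*t) b c (e + c*z^2) * Umat z t := by
  ext i j
  fin_cases i <;> fin_cases j <;>
    simp [Umat, soFiveNilpotent, Matrix.mul_apply, Fin.sum_univ_five,
      Matrix.vecHead, Matrix.vecTail]
  all_goals (first | (linear_combination (-(b*t))*htwo) | (linear_combination (-(c*z^2))*htwo) | ring)

private lemma dConj {al be : F} (ha : al ≠ 0) (hb : be ≠ 0) (a b c e : F) :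
    Dmat al be * soFiveNilpotent F a b c e
      = soFiveNilpotent F (al*a) (be*b) (al*be⁻¹*c) (al*be*e) * Dmat al be := by
  ext i j
  fin_cases i <;> fin_cases j <;>
    simp [Dmat, soFiveNilpotent, Matrix.mul_apply, Fin.sum_univ_five,
      Matrix.vecHead, Matrix.vecTail] <;>
    field_simp <;> ring

end Aux

theorem so5_nilpotent_conjugacy_iff
    {F : Type*} [Field F] [CharP F 2]
    (a a' e e' : F) (b c b' c' : Fˣ) :
    (∃ g : GL (Fin 5) F,
      (∀ v : Fin 5 → F,
        ((g : Matrix (Fin 5) (Fin 5) F).mulVec v 0) ^ 2 +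
          ((g : Matrix (Fin 5) (Fin 5) F).mulVec v 1) *
            ((g : Matrix (Fin 5) (Fin 5) F).mulVec v 3) +
          ((g : Matrix (Fin 5) (Fin 5) F).mulVec v 2) *
            ((g : Matrix (Fin 5) (Fin 5) F).mulVec v 4)
        = (v 0) ^ 2 + (v 1) * (v 3) + (v 2) * (v 4)) ∧
      (g : Matrix (Fin 5) (Fin 5) F) * soFiveNilpotent F a (b : F) (c : F) e *
          ((g⁻¹ : GL (Fin 5) F) : Matrix (Fin 5) (Fin 5) F)
        = soFiveNilpotent F a' (b' : F) (c' : F) e') ↔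
    ∃ y : F, y ^ 2 =
      e * ((c : F))⁻¹ * (((b : F))⁻¹) ^ 2 - e' * ((c' : F))⁻¹ * (((b' : F))⁻¹) ^ 2 := by
  have htwo : (2:F) = 0 := by exact_mod_cast CharP.cast_eq_zero F 2
  have hb : (b:F) ≠ 0 := b.ne_zero
  have hc : (c:F) ≠ 0 := c.ne_zero
  have hb' : (b':F) ≠ 0 := b'.ne_zero
  have hc' : (c':F) ≠ 0 := c'.ne_zero
  constructor
  · rintro ⟨g, hQ, hconj⟩
    set G : Matrix (Fin 5) (Fin 5) F := (g : Matrix (Fin 5) (Fin 5) F) with hG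
    set Gi : Matrix (Fin 5) (Fin 5) F := ((g⁻¹ : GL (Fin 5) F) : Matrix (Fin 5) (Fin 5) F)
      with hGidef
    have hGGi : G * Gi = 1 := by
      rw [hG, hGidef, ← Units.val_mul, mul_inv_cancel, Units.val_one]
    have hGiG : Gi * G = 1 := by
      rw [hG, hGidef, ← Units.val_mul, inv_mul_cancel, Units.val_one]
    have hQi : ∀ w : Fin 5 → F,
        (Gi.mulVec w 0) ^ 2 + (Gi.mulVec w 1) * (Gi.mulVec w 3) +
          (Gi.mulVec w 2) * (Gi.mulVec w 4)
        = (w 0) ^ 2 + (w 1) * (w 3) + (w 2) * (w 4) := by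
      intro w
      have h := hQ (Gi.mulVec w)
      rw [Matrix.mulVec_mulVec, hGGi, Matrix.one_mulVec] at h
      exact h.symm
    set n : Matrix (Fin 5) (Fin 5) F := soFiveNilpotent F a (b : F) (c : F) e with hn
    set n' : Matrix (Fin 5) (Fin 5) F := soFiveNilpotent F a' (b' : F) (c' : F) e' with hn'
    have hcomm : n * Gi = Gi * n' := by
      rw [← hconj, ← mul_assoc, ← mul_assoc, hGiG, one_mul]
    set v : Fin 5 → F := Gi.mulVec ![0,0,0,1,0] with hv
    have hn'E3 : n'.mulVec ![0,0,0,1,0] = ![a', 0, e', 0, (c' : F)] := by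
      funext i
      fin_cases i <;>
        simp [hn', soFiveNilpotent, Matrix.mulVec, dotProduct, Fin.sum_univ_five,
          Matrix.vecHead, Matrix.vecTail]
    have hn'w1 : n'.mulVec ![a', 0, e', 0, (c' : F)] = ![(b':F)*(c':F), 0, 0, 0, 0] := by
      funext i
      fin_cases i <;>
        simp [hn', soFiveNilpotent, Matrix.mulVec, dotProduct, Fin.sum_univ_five,
          Matrix.vecHead, Matrix.vecTail]
      · linear_combination ((c':F)*e')*htwo
    have hnv : n.mulVec v = Gi.mulVec ![a', 0, e', 0, (c' : F)] := by
      rw [hv, Matrix.mulVec_mulVec, hcomm, ← Matrix.mulVec_mulVec, hn'E3]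
    have hnnv : n.mulVec (n.mulVec v) = Gi.mulVec ![(b':F)*(c':F), 0, 0, 0, 0] := by
      rw [hnv, Matrix.mulVec_mulVec, hcomm, ← Matrix.mulVec_mulVec, hn'w1]
    have EqA := hQi ![a', 0, e', 0, (c' : F)]
    rw [← hnv] at EqA
    have EqB := hQi ![(b':F)*(c':F), 0, 0, 0, 0]
    rw [← hnnv] at EqB
    simp [hn, soFiveNilpotent, Matrix.mulVec, dotProduct, Fin.sum_univ_five,
      Matrix.vecHead, Matrix.vecTail] at EqA EqB
    have hv3 : (b:F)*(c:F)*(v 3) = (b':F)*(c':F) := by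
      have h0 : ((b:F)*(c:F)*(v 3) - (b':F)*(c':F))^2 = 0 := by
        linear_combination EqB + ((b':F)^2*(c':F)^2 - (b:F)*(c:F)*(v 3)*(b':F)*(c':F))*htwo
      exact sub_eq_zero.mp (pow_eq_zero_iff two_ne_zero |>.mp h0)
    refine ⟨(a * v 3 + (b:F) * v 4 + a') * (((b':F)*(c':F)))⁻¹, ?_⟩
    field_simp
    linear_combination ((b:F)^2*(c:F)) * EqA
      - (e*((b:F)*(c:F)*(v 3) + (b':F)*(c':F))) * hv3
      + (((b:F)^2*(c:F))*(a'^2 + (c':F)*e' + a'*(a*(v 3) + (b:F)*(v 4)))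
          - e*(c':F)^2*(b':F)^2) * htwo
  · rintro ⟨y, hy⟩
    set al : F := (c':F)*(b':F)*((c:F))⁻¹*((b:F))⁻¹ with hal
    set be : F := (b':F)*((b:F))⁻¹ with hbe
    set z : F := (b:F)*y with hz
    set t : F := a'*(c:F)*((c':F))⁻¹*((b':F))⁻¹ + a*((b:F))⁻¹ + (c:F)*y with ht
    have hane : al ≠ 0 := by
      rw [hal]
      exact mul_ne_zero (mul_ne_zero (mul_ne_zero hc' hb') (inv_ne_zero hc)) (inv_ne_zero hb)
    have hbne : be ≠ 0 := by
      rw [hbe]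
      exact mul_ne_zero hb' (inv_ne_zero hb)
    have h1 : (Dmat al be * Umat z t) * (Uinv z t * Dinv al be) = 1 := by
      rw [mul_assoc, ← mul_assoc (Umat z t), uMul, one_mul, dMul hane hbne]
    have h2 : (Uinv z t * Dinv al be) * (Dmat al be * Umat z t) = 1 := by
      rw [mul_assoc, ← mul_assoc (Dinv al be), dMul' hane hbne, one_mul, uMul']
    refine ⟨⟨Dmat al be * Umat z t, Uinv z t * Dinv al be, h1, h2⟩, ?_, ?_⟩
    · intro v
      show (((Dmat al be * Umat z t).mulVec v) 0) ^ 2 +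
          (((Dmat al be * Umat z t).mulVec v) 1) * (((Dmat al be * Umat z t).mulVec v) 3) +
          (((Dmat al be * Umat z t).mulVec v) 2) * (((Dmat al be * Umat z t).mulVec v) 4)
        = (v 0) ^ 2 + (v 1) * (v 3) + (v 2) * (v 4)
      rw [← Matrix.mulVec_mulVec, dQ hane hbne, uQ z t htwo]
    · show (Dmat al be * Umat z t) * soFiveNilpotent F a (b:F) (c:F) e *
          (Uinv z t * Dinv al be) = soFiveNilpotent F a' (b':F) (c':F) e'
      have hA : al*(a + (c:F)*z + (b:F)*t) = a' := by
        rw [hal, hz, ht]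
        field_simp
        linear_combination ((c':F)*(b':F)*a + (c':F)*(b':F)*(c:F)*(b:F)*y) * htwo
      have hB : be*(b:F) = (b':F) := by
        rw [hbe]; field_simp
      have hC : al*be⁻¹*(c:F) = (c':F) := by
        rw [hal, hbe]; field_simp
      have hE : al*be*(e + (c:F)*z^2) = e' := by
        have hy2 : y ^ 2 * ((c:F) * (b:F)^2 * (c':F) * (b':F)^2)
            = e * (c':F) * (b':F)^2 - e' * (c:F) * (b:F)^2 := by
          field_simp at hy
          linear_combination hy
        rw [hal, hbe, hz]
        field_simp
        linear_combination hy2 + ((c':F)*(b':F)^2*e - (c:F)*(b:F)^2*e')*htwo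
      have key : (Dmat al be * Umat z t) * soFiveNilpotent F a (b:F) (c:F) e
          = soFiveNilpotent F a' (b':F) (c':F) e' * (Dmat al be * Umat z t) := by
        rw [mul_assoc, uConj z t htwo, ← mul_assoc, dConj hane hbne, mul_assoc, hA, hB, hC, hE]
      rw [key, mul_assoc, h1, mul_one]
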